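/- Let Y be a subset of the finite set X. Every transformation in Perm(Y) = {s ∈ S : Y·s = Y} is the realization of some concatenation of finitely many minimal straight permutator words of Y; that is, the words in the subsemigroup of T⁺ generated by M_S(Y) realize all elements of Perm(Y). -/

import Mathlib

/-- Realization of a word (list of generators), applied left to right. -/
def realize {X : Type*} (w : List (X → X)) : X → X :=
  fun x => w.foldl (fun a f => f a) x

/-- `w` is a word over the generator set `T`: a nonempty list of elements of `T`. -/
def IsWordOver {X : Type*} (T : Finset (X → X)) (w : List (X → X)) : Prop :=
  w ≠ [] ∧ ∀ f ∈ w, f ∈ T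

/-- A word is straight if no nonempty proper prefix realizes the identity, and distinct
nonempty prefixes realize distinct transformations. -/
def IsStraight {X : Type*} (w : List (X → X)) : Prop :=
  (∀ k, 1 ≤ k → k < w.length → realize (w.take k) ≠ id) ∧
  (∀ k l, 1 ≤ k → k ≤ w.length → 1 ≤ l → l ≤ w.length →
    realize (w.take k) = realize (w.take l) → k = l)

/-- The semigroup generated by `T`: all transformations realized by nonempty words over `T`. -/
def SgpGen {X : Type*} (T : Finset (X → X)) : Set (X → X) :=
  {s | ∃ w : List (X → X), IsWordOver T w ∧ realize w = s}

/-- A permutator word of `Y`: a word over `T` whose realization maps `Y` onto `Y`. -/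
def Permutator {X : Type*} (T : Finset (X → X)) (Y : Set X) (w : List (X → X)) : Prop :=
  IsWordOver T w ∧ realize w '' Y = Y

/-- A minimal permutator word of `Y`: a permutator word not factorizable into two
permutator words. -/
def MinPermutator {X : Type*} (T : Finset (X → X)) (Y : Set X) (w : List (X → X)) : Prop :=
  Permutator T Y w ∧ ¬ ∃ u v, w = u ++ v ∧ Permutator T Y u ∧ Permutator T Y v

/-- The full permutator semigroup `Perm(Y)` of elements of `⟨T⟩` mapping `Y` onto `Y`. -/
def PermSet {X : Type*} (T : Finset (X → X)) (Y : Set X) : Set (X → X) :=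
  {s | s ∈ SgpGen T ∧ s '' Y = Y}

lemma realize_append {X : Type*} (u v : List (X → X)) :
    realize (u ++ v) = realize v ∘ realize u := by
  funext x
  simp [realize, List.foldl_append]

/-- Shrinking a word using two equal-realization prefixes. -/
lemma shrink_eq {X : Type*} (w : List (X → X)) (k l : ℕ) (hk : 1 ≤ k) (hkl : k < l)
    (hl : l ≤ w.length) (heq : realize (w.take k) = realize (w.take l)) :
    (w.take k ++ w.drop l).length < w.length ∧
    realize (w.take k ++ w.drop l) = realize w := by
  constructor
  · simp only [List.length_append, List.length_take, List.length_drop]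
    omega
  · have h1 : realize (w.take l ++ w.drop l) = realize w := by
      rw [List.take_append_drop]
    rw [realize_append, heq, ← realize_append, h1]

lemma key_lemma {X : Type*} (T : Finset (X → X)) (Y : Set X) :
    ∀ n (w : List (X → X)), w.length ≤ n → Permutator T Y w →
      ∃ L : List (List (X → X)), L ≠ [] ∧
        (∀ u ∈ L, MinPermutator T Y u ∧ IsStraight u) ∧ realize L.flatten = realize w := by
  intro n
  induction n with
  | zero =>
    intro w hw hp
    exact absurd (List.length_eq_zero_iff.mp (Nat.le_zero.mp hw)) hp.1.1
  | succ n ih =>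
    intro w hw hp
    by_cases hfac : ∃ u v, w = u ++ v ∧ Permutator T Y u ∧ Permutator T Y v
    · obtain ⟨u, v, rfl, hu, hv⟩ := hfac
      have hun : u ≠ [] := hu.1.1
      have hvn : v ≠ [] := hv.1.1
      have hu1 : 1 ≤ u.length := List.length_pos_iff.mpr hun
      have hv1 : 1 ≤ v.length := List.length_pos_iff.mpr hvn
      have hlen : (u ++ v).length = u.length + v.length := List.length_append
      obtain ⟨Lu, hLu0, hLu, hLur⟩ := ih u (by omega) hu
      obtain ⟨Lv, hLv0, hLv, hLvr⟩ := ih v (by omega) hv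
      refine ⟨Lu ++ Lv, by simp [hLu0], ?_, ?_⟩
      · intro x hx
        rcases List.mem_append.mp hx with h | h
        · exact hLu x h
        · exact hLv x h
      · rw [List.flatten_append, realize_append, realize_append, hLur, hLvr]
    · by_cases hstr : IsStraight w
      · refine ⟨[w], by simp, ?_, by simp [realize]⟩
        intro u hu
        rw [List.mem_singleton] at hu
        subst hu
        exact ⟨⟨hp, hfac⟩, hstr⟩
      · -- w is not straight: produce a strictly shorter permutator with the same realization
        have hshort : ∃ w' : List (X → X), w'.length ≤ n ∧ Permutator T Y w' ∧
            realize w' = realize w := by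
          rw [IsStraight, not_and_or] at hstr
          rcases hstr with h | h
          · push_neg at h
            obtain ⟨k, hk1, hklt, hid⟩ := h
            refine ⟨w.drop k, ?_, ⟨⟨?_, ?_⟩, ?_⟩, ?_⟩
            · simp only [List.length_drop]; omega
            · apply List.ne_nil_of_length_pos
              simp only [List.length_drop]; omega
            · intro f hf; exact hp.1.2 f (List.drop_subset k w hf)
            · have : realize (w.drop k) = realize w := by
                conv_rhs => rw [← List.take_append_drop k w]
                rw [realize_append, hid]
                rfl
              rw [this]; exact hp.2
            · conv_rhs => rw [← List.take_append_drop k w]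
              rw [realize_append, hid]
              rfl
          · push_neg at h
            obtain ⟨k, l, hk1, hkle, hl1, hlle, heq, hne⟩ := h
            -- wlog k < l
            have main : ∀ k l : ℕ, 1 ≤ k → k < l → l ≤ w.length →
                realize (w.take k) = realize (w.take l) →
                ∃ w' : List (X → X), w'.length ≤ n ∧ Permutator T Y w' ∧
                  realize w' = realize w := by
              intro k l hk1 hkl hl heq
              obtain ⟨hlen, hreal⟩ := shrink_eq w k l hk1 hkl hl heq
              refine ⟨w.take k ++ w.drop l, by omega, ⟨⟨?_, ?_⟩, ?_⟩, hreal⟩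
              · apply List.ne_nil_of_length_pos
                simp only [List.length_append, List.length_take, List.length_drop]
                omega
              · intro f hf
                rcases List.mem_append.mp hf with h' | h'
                · exact hp.1.2 f (List.take_subset k w h')
                · exact hp.1.2 f (List.drop_subset l w h')
              · rw [hreal]; exact hp.2
            rcases Nat.lt_or_ge k l with hkl | hge
            · exact main k l hk1 hkl hlle heq
            · have hkl : l < k := lt_of_le_of_ne hge (fun h => hne h.symm)
              exact main l k hl1 hkl hkle heq.symm
        obtain ⟨w', hle, hp', hr⟩ := hshort
        obtain ⟨L, hL0, hL, hLr⟩ := ih w' hle hp'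
        exact ⟨L, hL0, hL, by rw [hLr, hr]⟩

/-- Every transformation in `Perm(Y)` is realized by some concatenation of finitely many
minimal straight permutator words of `Y`. -/
theorem permSet_realized_by_minimal_straight
    (X : Type*) [Fintype X] [Nonempty X] (T : Finset (X → X)) (Y : Set X) :
    ∀ s ∈ PermSet T Y, ∃ L : List (List (X → X)), L ≠ [] ∧
      (∀ u ∈ L, MinPermutator T Y u ∧ IsStraight u) ∧ realize L.flatten = s := by
  intro s hs
  obtain ⟨⟨w, hw, rfl⟩, himg⟩ := hs
  exact key_lemma T Y w.length w le_rfl ⟨hw, himg⟩
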